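/- Let G be a finite graph on k vertices and for each permutation π let Q_π = P_πᵀ L_πᵀ F_π L_π P_π be the DAGAR precision matrix with parameter 0 ≤ ρ < 1 under ordering π. Define Q = (1/k!) Σ_π Q_π. Then the diagonal entries of Q satisfy Q_{ii} = 1 + n_i ρ²/(2(1-ρ²)) + (ρ²/(1-ρ²)) Σ_{j ~ i} (1/(n_j(n_j+1))) Σ_{r=1}^{n_j} r/(1+(r-1)ρ²). -/

import Mathlib

open Matrix BigOperators Finset
open scoped Classical

/-- The set of directed neighbours of `v`: neighbours of `v` in `G` preceding `v`
in the ordering given by the rank function `ord`. -/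
noncomputable def dagarN {V : Type*} [Fintype V] [DecidableEq V] (G : SimpleGraph V)
    (ord : V → ℕ) (v : V) : Finset V :=
  Finset.univ.filter (fun u => G.Adj v u ∧ ord u < ord v)

/-- The DAGAR autoregression coefficient matrix `B`:
`B v u = ρ/(1+(n_v-1)ρ²)` if `u` is a directed neighbour of `v` (with `n_v` the number of
directed neighbours of `v`), and `0` otherwise. -/
noncomputable def dagarB {V : Type*} [Fintype V] [DecidableEq V] (G : SimpleGraph V)
    (ord : V → ℕ) (ρ : ℝ) : Matrix V V ℝ :=
  Matrix.of fun v u =>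
    if u ∈ dagarN G ord v then ρ / (1 + (((dagarN G ord v).card : ℝ) - 1) * ρ ^ 2) else 0

/-- The DAGAR diagonal matrix of conditional precisions `τ_v = (1+(n_v-1)ρ²)/(1-ρ²)`. -/
noncomputable def dagarF {V : Type*} [Fintype V] [DecidableEq V] (G : SimpleGraph V)
    (ord : V → ℕ) (ρ : ℝ) : Matrix V V ℝ :=
  Matrix.diagonal fun v => (1 + (((dagarN G ord v).card : ℝ) - 1) * ρ ^ 2) / (1 - ρ ^ 2)

/-- The DAGAR precision matrix `Q = (I-B)ᵀ F (I-B)` for the ordering `ord`. -/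
noncomputable def dagarQ {V : Type*} [Fintype V] [DecidableEq V] (G : SimpleGraph V)
    (ord : V → ℕ) (ρ : ℝ) : Matrix V V ℝ :=
  (1 - dagarB G ord ρ)ᵀ * dagarF G ord ρ * (1 - dagarB G ord ρ)

/-- The order-free DAGAR precision matrix: the average of the DAGAR precision matrices
over all `k!` orderings (permutations) of the vertices. -/
noncomputable def dagarOF {V : Type*} [Fintype V] [DecidableEq V] (G : SimpleGraph V)
    (ρ : ℝ) : Matrix V V ℝ :=
  ((Nat.factorial (Fintype.card V) : ℝ))⁻¹ •
    ∑ π : Equiv.Perm V, dagarQ G (fun v => ((Fintype.equivFin V) (π v) : ℕ)) ρ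

namespace DagarAux

variable {k : ℕ}

noncomputable def ordOf (π : Equiv.Perm (Fin k)) : Fin k → ℕ :=
  fun v => ((Fintype.equivFin (Fin k)) (π v) : ℕ)

lemma ordOf_injective (π : Equiv.Perm (Fin k)) : Function.Injective (ordOf π) := by
  intro a b h
  exact π.injective ((Fintype.equivFin (Fin k)).injective (Fin.val_injective h))

lemma ordOf_mul (π τ : Equiv.Perm (Fin k)) : ordOf (π * τ) = ordOf π ∘ τ := rfl

/-- rank of `u` w.r.t. `ord` inside `T` -/
noncomputable def rk (ord : Fin k → ℕ) (T : Finset (Fin k)) (u : Fin k) : ℕ :=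
  (T.filter fun w => ord w < ord u).card

lemma swap_mem {T : Finset (Fin k)} {a b : Fin k} (ha : a ∈ T) (hb : b ∈ T)
    {w : Fin k} (hw : w ∈ T) : Equiv.swap a b w ∈ T := by
  rcases eq_or_ne w a with rfl | h1
  · simpa [Equiv.swap_apply_left] using hb
  rcases eq_or_ne w b with rfl | h2
  · simpa [Equiv.swap_apply_right] using ha
  · simpa [Equiv.swap_apply_of_ne_of_ne h1 h2] using hw

lemma rk_comp_swap (ord : Fin k → ℕ) {T : Finset (Fin k)} {a b : Fin k}
    (ha : a ∈ T) (hb : b ∈ T) (u : Fin k) :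
    rk (ord ∘ Equiv.swap a b) T u = rk ord T (Equiv.swap a b u) := by
  unfold rk
  apply Finset.card_bij' (fun w _ => Equiv.swap a b w) (fun w _ => Equiv.swap a b w)
  · intro w hw
    simp only [mem_filter, Function.comp_apply] at hw ⊢
    exact ⟨swap_mem ha hb hw.1, hw.2⟩
  · intro w hw
    simp only [mem_filter, Function.comp_apply] at hw ⊢
    refine ⟨swap_mem ha hb hw.1, ?_⟩
    simpa [Equiv.swap_apply_self] using hw.2
  · intro w _; exact Equiv.swap_apply_self a b w
  · intro w _; exact Equiv.swap_apply_self a b w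

lemma rk_injOn {ord : Fin k → ℕ} (hord : Function.Injective ord) (T : Finset (Fin k)) :
    Set.InjOn (rk ord T) T := by
  have key : ∀ u ∈ T, ∀ u' ∈ T, ord u < ord u' → rk ord T u < rk ord T u' := by
    intro u hu u' hu' hlt
    apply Finset.card_lt_card
    constructor
    · intro w hw
      rw [Finset.mem_filter] at hw ⊢
      exact ⟨hw.1, hw.2.trans hlt⟩
    · intro hsub
      have := hsub (Finset.mem_filter.mpr ⟨hu, hlt⟩)
      simp at this
  intro u hu u' hu' h
  by_contra hne
  rcases Nat.lt_or_ge (ord u) (ord u') with hlt | hge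
  · exact absurd h (Nat.ne_of_lt (key u hu u' hu' hlt))
  · have : ord u' < ord u := lt_of_le_of_ne hge fun e => hne (hord e.symm)
    exact absurd h.symm (Nat.ne_of_lt (key u' hu' u hu this))

lemma rk_lt {ord : Fin k → ℕ} (T : Finset (Fin k)) {u : Fin k} (hu : u ∈ T) :
    rk ord T u < T.card := by
  have : T.filter (fun w => ord w < ord u) ⊆ T.erase u := by
    intro w hw
    rcases Finset.mem_filter.mp hw with ⟨h1, h2⟩
    exact Finset.mem_erase.mpr ⟨fun e => by simp [e] at h2, h1⟩
  calc rk ord T u ≤ (T.erase u).card := Finset.card_le_card this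
    _ < T.card := Finset.card_erase_lt_of_mem hu

lemma rk_existsUnique {ord : Fin k → ℕ} (hord : Function.Injective ord)
    (T : Finset (Fin k)) {m : ℕ} (hm : m < T.card) :
    ∃! u, u ∈ T ∧ rk ord T u = m := by
  have himg : T.image (rk ord T) = Finset.range T.card := by
    apply Finset.eq_of_subset_of_card_le
    · intro x hx
      rcases Finset.mem_image.mp hx with ⟨u, hu, rfl⟩
      exact Finset.mem_range.mpr (rk_lt T hu)
    · rw [Finset.card_range, Finset.card_image_of_injOn (rk_injOn hord T)]
  have : m ∈ T.image (rk ord T) := by rw [himg]; exact Finset.mem_range.mpr hm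
  rcases Finset.mem_image.mp this with ⟨u, hu, hru⟩
  exact ⟨u, ⟨hu, hru⟩, fun v ⟨hv, hrv⟩ => rk_injOn hord T hv hu (hrv.trans hru.symm)⟩

/-- the element of `T` with rank `m` -/
noncomputable def pick {ord : Fin k → ℕ} (hord : Function.Injective ord)
    (T : Finset (Fin k)) {m : ℕ} (hm : m < T.card) : Fin k :=
  Finset.choose (fun u => rk ord T u = m) T (rk_existsUnique hord T hm)

lemma pick_mem {ord : Fin k → ℕ} (hord : Function.Injective ord)
    (T : Finset (Fin k)) {m : ℕ} (hm : m < T.card) : pick hord T hm ∈ T :=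
  Finset.choose_mem _ _ _

lemma rk_pick {ord : Fin k → ℕ} (hord : Function.Injective ord)
    (T : Finset (Fin k)) {m : ℕ} (hm : m < T.card) : rk ord T (pick hord T hm) = m :=
  Finset.choose_property (fun u => rk ord T u = m) T (rk_existsUnique hord T hm)

lemma pick_unique {ord : Fin k → ℕ} (hord : Function.Injective ord)
    (T : Finset (Fin k)) {m : ℕ} (hm : m < T.card) {u : Fin k}
    (hu : u ∈ T) (hru : rk ord T u = m) : u = pick hord T hm :=
  (rk_existsUnique hord T hm).unique ⟨hu, hru⟩ ⟨pick_mem hord T hm, rk_pick hord T hm⟩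


lemma ordOf_mul_swap (π : Equiv.Perm (Fin k)) (a b v : Fin k) :
    ordOf (π * Equiv.swap a b) v = ordOf π (Equiv.swap a b v) := rfl

lemma rk_mul_swap (π : Equiv.Perm (Fin k)) {T : Finset (Fin k)} {a b : Fin k}
    (ha : a ∈ T) (hb : b ∈ T) (u : Fin k) :
    rk (ordOf (π * Equiv.swap a b)) T u = rk (ordOf π) T (Equiv.swap a b u) := by
  rw [ordOf_mul]
  exact rk_comp_swap _ ha hb u

lemma fiber_card_eq (T : Finset (Fin k)) {j : Fin k} (hj : j ∈ T) {m m' : ℕ}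
    (hm : m < T.card) (hm' : m' < T.card) :
    (Finset.univ.filter fun π : Equiv.Perm (Fin k) => rk (ordOf π) T j = m).card
      = (Finset.univ.filter fun π : Equiv.Perm (Fin k) => rk (ordOf π) T j = m').card := by
  have key : ∀ (m₁ m₂ : ℕ) (h1 : m₁ < T.card) (h2 : m₂ < T.card) (π : Equiv.Perm (Fin k)),
      rk (ordOf π) T j = m₁ →
      rk (ordOf (π * Equiv.swap j (pick (ordOf_injective π) T h2))) T j = m₂ := by
    intro m₁ m₂ h1 h2 π hπ
    rw [rk_mul_swap π hj (pick_mem (ordOf_injective π) T h2), Equiv.swap_apply_left]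
    exact rk_pick _ _ _
  have inv : ∀ (m₁ m₂ : ℕ) (h1 : m₁ < T.card) (h2 : m₂ < T.card) (π : Equiv.Perm (Fin k)),
      rk (ordOf π) T j = m₁ →
      π * Equiv.swap j (pick (ordOf_injective π) T h2)
        * Equiv.swap j (pick (ordOf_injective (π * Equiv.swap j (pick (ordOf_injective π) T h2))) T h1) = π := by
    intro m₁ m₂ h1 h2 π hπ
    set t := pick (ordOf_injective π) T h2 with ht
    have htT : t ∈ T := pick_mem _ _ _
    have hpick : t = pick (ordOf_injective (π * Equiv.swap j t)) T h1 := by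
      apply pick_unique _ _ _ htT
      rw [rk_mul_swap π hj htT, Equiv.swap_apply_right]
      exact hπ
    rw [← hpick, mul_assoc, Equiv.swap_mul_self, mul_one]
  apply Finset.card_bij'
    (fun π _ => π * Equiv.swap j (pick (ordOf_injective π) T hm'))
    (fun π _ => π * Equiv.swap j (pick (ordOf_injective π) T hm))
  · intro π hπ
    simp only [Finset.mem_filter, Finset.mem_univ, true_and] at hπ ⊢
    exact key m m' hm hm' π hπ
  · intro π hπ
    simp only [Finset.mem_filter, Finset.mem_univ, true_and] at hπ ⊢
    exact key m' m hm' hm π hπ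
  · intro π hπ
    simp only [Finset.mem_filter, Finset.mem_univ, true_and] at hπ
    exact inv m m' hm hm' π hπ
  · intro π hπ
    simp only [Finset.mem_filter, Finset.mem_univ, true_and] at hπ
    exact inv m' m hm' hm π hπ

lemma fiber_card_mul (T : Finset (Fin k)) {j : Fin k} (hj : j ∈ T) {m : ℕ} (hm : m < T.card) :
    T.card * (Finset.univ.filter fun π : Equiv.Perm (Fin k) => rk (ordOf π) T j = m).card
      = Nat.factorial k := by
  have hcard : (Finset.univ : Finset (Equiv.Perm (Fin k))).card = Nat.factorial k := by
    rw [Finset.card_univ, Fintype.card_perm, Fintype.card_fin]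
  have hsum := Finset.card_eq_sum_card_fiberwise
    (f := fun π : Equiv.Perm (Fin k) => rk (ordOf π) T j)
    (s := (Finset.univ : Finset (Equiv.Perm (Fin k)))) (t := Finset.range T.card)
    (fun π _ => Finset.mem_range.mpr (rk_lt T hj))
  rw [Finset.sum_congr rfl (fun m' hm' => fiber_card_eq T hj (Finset.mem_range.mp hm') hm)]
    at hsum
  simp only [Finset.sum_const, Finset.card_range, smul_eq_mul] at hsum
  rw [← hcard, hsum]

/-- Sum over permutations of a function of the rank of `j` in `T`. -/
lemma sum_g_rk (T : Finset (Fin k)) {j : Fin k} (hj : j ∈ T) (g : ℕ → ℝ) :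
    (T.card : ℝ) * ∑ π : Equiv.Perm (Fin k), g (rk (ordOf π) T j)
      = (Nat.factorial k : ℝ) * ∑ m ∈ Finset.range T.card, g m := by
  rw [← Finset.sum_fiberwise_of_maps_to
    (g := fun π : Equiv.Perm (Fin k) => rk (ordOf π) T j) (t := Finset.range T.card)
    (fun π _ => Finset.mem_range.mpr (rk_lt T hj)) (fun π => g (rk (ordOf π) T j))]
  rw [Finset.mul_sum, Finset.mul_sum]
  apply Finset.sum_congr rfl
  intro m hm
  have : ∀ π ∈ Finset.univ.filter (fun π : Equiv.Perm (Fin k) => rk (ordOf π) T j = m),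
      g (rk (ordOf π) T j) = g m := by
    intro π hπ
    rw [(Finset.mem_filter.mp hπ).2]
  rw [Finset.sum_congr rfl this, Finset.sum_const, nsmul_eq_mul]
  have := fiber_card_mul T hj (Finset.mem_range.mp hm)
  have h2 : ((T.card : ℝ)) * ((Finset.univ.filter fun π : Equiv.Perm (Fin k) => rk (ordOf π) T j = m).card : ℝ) = (Nat.factorial k : ℝ) := by
    exact_mod_cast congrArg (Nat.cast : ℕ → ℝ) this
  rw [← mul_assoc, h2]


section Graph

variable (G : SimpleGraph (Fin k)) [DecidableRel G.Adj]

lemma dagarN_eq_filter (ord : Fin k → ℕ) (j : Fin k) :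
    dagarN G ord j = (G.neighborFinset j).filter (fun w => ord w < ord j) := by
  ext u
  simp only [dagarN, Finset.mem_filter, Finset.mem_univ, true_and,
    SimpleGraph.mem_neighborFinset]

lemma dagarN_card_eq_rk (ord : Fin k → ℕ) (j : Fin k) :
    (dagarN G ord j).card = rk ord (insert j (G.neighborFinset j)) j := by
  rw [dagarN_eq_filter]
  unfold rk
  rw [Finset.filter_insert, if_neg (lt_irrefl _)]

/-- pair counting: for `u ≠ v`, `u` precedes `v` in exactly half of all permutations. -/
lemma sum_ite_lt {u v : Fin k} (huv : u ≠ v) :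
    ∑ π : Equiv.Perm (Fin k), (if ordOf π u < ordOf π v then (1:ℝ) else 0)
      = (Nat.factorial k : ℝ) / 2 := by
  have hswap : ∑ π : Equiv.Perm (Fin k), (if ordOf π v < ordOf π u then (1:ℝ) else 0)
      = ∑ π : Equiv.Perm (Fin k), (if ordOf π u < ordOf π v then (1:ℝ) else 0) := by
    apply Fintype.sum_bijective (fun π => π * Equiv.swap u v)
      (Group.mulRight_bijective _)
    intro π
    rw [ordOf_mul_swap, ordOf_mul_swap, Equiv.swap_apply_left, Equiv.swap_apply_right]
  have htot : ∑ π : Equiv.Perm (Fin k),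
      ((if ordOf π u < ordOf π v then (1:ℝ) else 0)
        + (if ordOf π v < ordOf π u then (1:ℝ) else 0)) = (Nat.factorial k : ℝ) := by
    have hone : ∀ π : Equiv.Perm (Fin k),
        (if ordOf π u < ordOf π v then (1:ℝ) else 0)
        + (if ordOf π v < ordOf π u then (1:ℝ) else 0) = 1 := by
      intro π
      have hne : ordOf π u ≠ ordOf π v := fun e => huv (ordOf_injective π e)
      rcases Nat.lt_or_ge (ordOf π u) (ordOf π v) with h | h
      · rw [if_pos h, if_neg (by omega), add_zero]
      · have h' : ordOf π v < ordOf π u := lt_of_le_of_ne h (Ne.symm hne)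
        rw [if_neg (by omega), if_pos h', zero_add]
    rw [Finset.sum_congr rfl (fun π _ => hone π)]
    simp [Finset.card_univ, Fintype.card_perm, Fintype.card_fin]
  rw [Finset.sum_add_distrib, hswap] at htot
  linarith

/-- L2: average count of preceding neighbours. -/
lemma sum_card_dagarN (i : Fin k) :
    ∑ π : Equiv.Perm (Fin k), ((dagarN G (ordOf π) i).card : ℝ)
      = (Nat.factorial k : ℝ) * (G.degree i : ℝ) / 2 := by
  have hterm : ∀ π : Equiv.Perm (Fin k), ((dagarN G (ordOf π) i).card : ℝ)
      = ∑ u ∈ G.neighborFinset i, (if ordOf π u < ordOf π i then (1:ℝ) else 0) := by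
    intro π
    rw [dagarN_eq_filter, Finset.sum_boole]
  rw [Finset.sum_congr rfl (fun π _ => hterm π), Finset.sum_comm]
  have hne : ∀ u ∈ G.neighborFinset i, u ≠ i := by
    intro u hu
    intro e
    subst e
    exact G.irrefl ((SimpleGraph.mem_neighborFinset G u u).mp hu)
  rw [Finset.sum_congr rfl (fun u hu => sum_ite_lt (hne u hu))]
  rw [Finset.sum_const, SimpleGraph.degree, nsmul_eq_mul]
  ring
lemma sum_ite_g_eq (g : ℕ → ℝ) {j i u : Fin k} (hi : i ∈ G.neighborFinset j)
    (hu : u ∈ G.neighborFinset j) :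
    ∑ π : Equiv.Perm (Fin k),
        (if ordOf π u < ordOf π j then g (rk (ordOf π) (insert j (G.neighborFinset j)) j) else 0)
      = ∑ π : Equiv.Perm (Fin k),
        (if ordOf π i < ordOf π j then g (rk (ordOf π) (insert j (G.neighborFinset j)) j) else 0) := by
  have hji : j ≠ i := by
    intro e; subst e; exact G.irrefl ((SimpleGraph.mem_neighborFinset G j j).mp hi)
  have hju : j ≠ u := by
    intro e; subst e; exact G.irrefl ((SimpleGraph.mem_neighborFinset G j j).mp hu)
  have hiT : i ∈ insert j (G.neighborFinset j) := Finset.mem_insert_of_mem hi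
  have huT : u ∈ insert j (G.neighborFinset j) := Finset.mem_insert_of_mem hu
  apply Fintype.sum_bijective (fun π => π * Equiv.swap u i) (Group.mulRight_bijective _)
  intro π
  simp only [ordOf_mul_swap, rk_mul_swap π huT hiT, Equiv.swap_apply_right,
    Equiv.swap_apply_of_ne_of_ne hju hji]

lemma key3 {j i : Fin k} (hij : i ∈ G.neighborFinset j) (g : ℕ → ℝ) :
    ((G.degree j : ℝ) * ((G.degree j : ℝ) + 1)) *
      ∑ π : Equiv.Perm (Fin k),
        (if ordOf π i < ordOf π j then g ((dagarN G (ordOf π) j).card) else 0)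
      = (Nat.factorial k : ℝ) * ∑ r ∈ Finset.Icc 1 (G.degree j), (r : ℝ) * g r := by
  set S := G.neighborFinset j with hS
  set T := insert j S with hT
  have hjS : j ∉ S := by
    intro h; exact G.irrefl ((SimpleGraph.mem_neighborFinset G j j).mp h)
  have hjT : j ∈ T := Finset.mem_insert_self j S
  have hdeg : G.degree j = S.card := rfl
  have hTcard : T.card = G.degree j + 1 := by
    rw [hT, Finset.card_insert_of_notMem hjS, hdeg]
  -- rewrite dagarN-card as rank
  have hcard : ∀ (ord : Fin k → ℕ), (dagarN G ord j).card = rk ord T j := by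
    intro ord; exact dagarN_card_eq_rk G ord j
  have hrk_filter : ∀ (ord : Fin k → ℕ),
      (S.filter fun w => ord w < ord j).card = rk ord T j := by
    intro ord
    unfold rk
    rw [hT, Finset.filter_insert, if_neg (lt_irrefl _)]
  -- step 1
  have step1 : (G.degree j : ℝ) * ∑ π : Equiv.Perm (Fin k),
        (if ordOf π i < ordOf π j then g (rk (ordOf π) T j) else 0)
      = ∑ π : Equiv.Perm (Fin k), ((rk (ordOf π) T j : ℝ)) * g (rk (ordOf π) T j) := by
    have hpt : ∀ π : Equiv.Perm (Fin k),
        ∑ u ∈ S, (if ordOf π u < ordOf π j then g (rk (ordOf π) T j) else 0)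
          = ((rk (ordOf π) T j : ℝ)) * g (rk (ordOf π) T j) := by
      intro π
      rw [← Finset.sum_filter, Finset.sum_const, nsmul_eq_mul, hrk_filter (ordOf π)]
    calc (G.degree j : ℝ) * ∑ π : Equiv.Perm (Fin k),
        (if ordOf π i < ordOf π j then g (rk (ordOf π) T j) else 0)
        = ∑ u ∈ S, ∑ π : Equiv.Perm (Fin k),
            (if ordOf π u < ordOf π j then g (rk (ordOf π) T j) else 0) := by
          rw [Finset.sum_congr rfl (fun u hu => sum_ite_g_eq G g hij hu),
            Finset.sum_const, hdeg, nsmul_eq_mul]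
      _ = ∑ π : Equiv.Perm (Fin k), ∑ u ∈ S,
            (if ordOf π u < ordOf π j then g (rk (ordOf π) T j) else 0) := Finset.sum_comm
      _ = ∑ π : Equiv.Perm (Fin k), ((rk (ordOf π) T j : ℝ)) * g (rk (ordOf π) T j) := by
          exact Finset.sum_congr rfl (fun π _ => hpt π)
  have step2 := sum_g_rk T hjT (fun m => (m : ℝ) * g m)
  have hrange : ∑ m ∈ Finset.range (G.degree j + 1), (m : ℝ) * g m
      = ∑ r ∈ Finset.Icc 1 (G.degree j), (r : ℝ) * g r := by
    have he : Finset.range (G.degree j + 1) = insert 0 (Finset.Icc 1 (G.degree j)) := by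
      ext x; simp; omega
    rw [he, Finset.sum_insert (by simp)]
    simp
  calc ((G.degree j : ℝ) * ((G.degree j : ℝ) + 1)) *
      ∑ π : Equiv.Perm (Fin k),
        (if ordOf π i < ordOf π j then g ((dagarN G (ordOf π) j).card) else 0)
      = ((G.degree j : ℝ) + 1) * ((G.degree j : ℝ) *
        ∑ π : Equiv.Perm (Fin k),
          (if ordOf π i < ordOf π j then g (rk (ordOf π) T j) else 0)) := by
        rw [Finset.sum_congr rfl (fun π _ => by rw [hcard (ordOf π)])]
        ring
    _ = ((G.degree j : ℝ) + 1) * ∑ π : Equiv.Perm (Fin k),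
          ((rk (ordOf π) T j : ℝ)) * g (rk (ordOf π) T j) := by rw [step1]
    _ = (T.card : ℝ) * ∑ π : Equiv.Perm (Fin k),
          ((rk (ordOf π) T j : ℝ)) * g (rk (ordOf π) T j) := by
        rw [hTcard]; push_cast; ring
    _ = (Nat.factorial k : ℝ) * ∑ m ∈ Finset.range T.card, (m : ℝ) * g m := step2
    _ = (Nat.factorial k : ℝ) * ∑ r ∈ Finset.Icc 1 (G.degree j), (r : ℝ) * g r := by
        rw [hTcard, hrange]

lemma diag_helper (f : Fin k → ℝ) (A : Matrix (Fin k) (Fin k) ℝ) (i : Fin k) :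
    (Aᵀ * Matrix.diagonal f * A) i i = ∑ v, f v * (A v i) ^ 2 := by
  simp only [Matrix.mul_apply, Matrix.transpose_apply, Matrix.diagonal_apply, mul_ite, mul_zero,
    Finset.sum_ite_eq', Finset.mem_univ, if_true]
  exact Finset.sum_congr rfl fun x _ => by ring

lemma dagarQ_diag (ord : Fin k → ℕ) {ρ : ℝ} (h0 : 0 ≤ ρ) (h1 : ρ < 1) (i : Fin k) :
    dagarQ G ord ρ i i
      = 1 + ((dagarN G ord i).card : ℝ) * ρ ^ 2 / (1 - ρ ^ 2)
        + ∑ j ∈ G.neighborFinset i,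
            (if ord i < ord j then
              ρ ^ 2 / ((1 - ρ ^ 2) * (1 + (((dagarN G ord j).card : ℝ) - 1) * ρ ^ 2)) else 0) := by
  have hρ2 : ρ ^ 2 < 1 := by nlinarith
  have h1ρ : (0:ℝ) < 1 - ρ ^ 2 := by linarith
  have hd : ∀ v : Fin k, i ∈ dagarN G ord v →
      (0:ℝ) < 1 + (((dagarN G ord v).card : ℝ) - 1) * ρ ^ 2 := by
    intro v hv
    have hcard : 1 ≤ (dagarN G ord v).card := Finset.card_pos.mpr ⟨i, hv⟩
    have : (1:ℝ) ≤ ((dagarN G ord v).card : ℝ) := by exact_mod_cast hcard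
    nlinarith [sq_nonneg ρ]
  rw [dagarQ, dagarF, diag_helper]
  rw [Fintype.sum_eq_add_sum_compl i]
  have hBii : dagarB G ord ρ i i = 0 := by
    simp [dagarB, dagarN, G.irrefl]
  have hfirst : (1 + (((dagarN G ord i).card : ℝ) - 1) * ρ ^ 2) / (1 - ρ ^ 2)
      * ((1 - dagarB G ord ρ) i i) ^ 2
      = 1 + ((dagarN G ord i).card : ℝ) * ρ ^ 2 / (1 - ρ ^ 2) := by
    rw [Matrix.sub_apply, Matrix.one_apply_eq, hBii, sub_zero, one_pow, mul_one]
    field_simp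
    ring
  have hsecond : ∀ v ∈ ({i}ᶜ : Finset (Fin k)),
      (1 + (((dagarN G ord v).card : ℝ) - 1) * ρ ^ 2) / (1 - ρ ^ 2)
        * ((1 - dagarB G ord ρ) v i) ^ 2
      = if G.Adj i v ∧ ord i < ord v then
          ρ ^ 2 / ((1 - ρ ^ 2) * (1 + (((dagarN G ord v).card : ℝ) - 1) * ρ ^ 2)) else 0 := by
    intro v hv
    have hvi : v ≠ i := by simpa using hv
    rw [Matrix.sub_apply, Matrix.one_apply_ne hvi]
    by_cases h : i ∈ dagarN G ord v
    · have hAdj : G.Adj i v ∧ ord i < ord v := by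
        have hm : G.Adj v i ∧ ord i < ord v := by simpa [dagarN] using h
        exact ⟨hm.1.symm, hm.2⟩
      rw [if_pos hAdj]
      have hB : dagarB G ord ρ v i = ρ / (1 + (((dagarN G ord v).card : ℝ) - 1) * ρ ^ 2) := by
        simp [dagarB, h]
      rw [hB]
      have hdv := hd v h
      field_simp
      ring
    · have hAdj : ¬(G.Adj i v ∧ ord i < ord v) := by
        intro hc
        apply h
        simp only [dagarN, Finset.mem_filter, Finset.mem_univ, true_and]
        exact ⟨hc.1.symm, hc.2⟩
      rw [if_neg hAdj]
      have hB : dagarB G ord ρ v i = 0 := by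
        simp [dagarB, h]
      rw [hB]
      ring
  rw [hfirst, Finset.sum_congr rfl hsecond]
  congr 1
  -- sum over {i}ᶜ of ite (Adj i v ∧ P) = sum over neighbours of ite P
  have hzero : (if G.Adj i i ∧ ord i < ord i then
      ρ ^ 2 / ((1 - ρ ^ 2) * (1 + (((dagarN G ord i).card : ℝ) - 1) * ρ ^ 2)) else 0) = 0 := by
    rw [if_neg]
    rintro ⟨h, -⟩
    exact G.irrefl h
  have huniv := Fintype.sum_eq_add_sum_compl i (fun v => if G.Adj i v ∧ ord i < ord v then
      ρ ^ 2 / ((1 - ρ ^ 2) * (1 + (((dagarN G ord v).card : ℝ) - 1) * ρ ^ 2)) else 0)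
  rw [hzero, zero_add] at huniv
  rw [← huniv, SimpleGraph.neighborFinset_eq_filter, Finset.sum_filter]
  exact Finset.sum_congr rfl fun v _ => by rw [← ite_and]

end Graph

end DagarAux

open DagarAux

/-- Diagonal entries of the order-free DAGAR precision matrix:
`Q_{ii} = 1 + nᵢρ²/(2(1-ρ²)) + (ρ²/(1-ρ²)) ∑_{j∼i} (1/(n_j(n_j+1))) ∑_{r=1}^{n_j} r/(1+(r-1)ρ²)`. -/

theorem dagarOF_diag {k : ℕ} (G : SimpleGraph (Fin k)) [DecidableRel G.Adj]
    (ρ : ℝ) (h0 : 0 ≤ ρ) (h1 : ρ < 1) (i : Fin k) :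
    dagarOF G ρ i i
      = 1 + (G.degree i : ℝ) * ρ ^ 2 / (2 * (1 - ρ ^ 2))
        + ρ ^ 2 / (1 - ρ ^ 2) *
          ∑ j ∈ G.neighborFinset i,
            (1 / ((G.degree j : ℝ) * ((G.degree j : ℝ) + 1))) *
              ∑ r ∈ Finset.Icc 1 (G.degree j), (r : ℝ) / (1 + ((r : ℝ) - 1) * ρ ^ 2) := by
  have hρ2 : ρ ^ 2 < 1 := by nlinarith
  have h1ρ : (0:ℝ) < 1 - ρ ^ 2 := by linarith
  have hfac : (0:ℝ) < (Nat.factorial k : ℝ) := by exact_mod_cast Nat.factorial_pos k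
  have hOF : dagarOF G ρ i i
      = ((Nat.factorial k : ℝ))⁻¹ * ∑ π : Equiv.Perm (Fin k), dagarQ G (ordOf π) ρ i i := by
    simp only [dagarOF, Matrix.smul_apply, Matrix.sum_apply, Fintype.card_fin, smul_eq_mul]
    rfl
  rw [hOF]
  rw [Finset.sum_congr rfl (fun π _ => dagarQ_diag G (ordOf π) h0 h1 i)]
  rw [Finset.sum_add_distrib, Finset.sum_add_distrib]
  have hA : ∑ _π : Equiv.Perm (Fin k), (1:ℝ) = (Nat.factorial k : ℝ) := by
    simp [Finset.card_univ, Fintype.card_perm, Fintype.card_fin]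
  have hB : ∑ π : Equiv.Perm (Fin k),
        ((dagarN G (ordOf π) i).card : ℝ) * ρ ^ 2 / (1 - ρ ^ 2)
      = (Nat.factorial k : ℝ) * ((G.degree i : ℝ) * ρ ^ 2 / (2 * (1 - ρ ^ 2))) := by
    rw [← Finset.sum_div, ← Finset.sum_mul, sum_card_dagarN G i]
    field_simp
  have hC : ∀ j ∈ G.neighborFinset i,
      ∑ π : Equiv.Perm (Fin k),
          (if ordOf π i < ordOf π j then
            ρ ^ 2 / ((1 - ρ ^ 2) * (1 + (((dagarN G (ordOf π) j).card : ℝ) - 1) * ρ ^ 2)) else 0)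
        = (Nat.factorial k : ℝ) * (ρ ^ 2 / (1 - ρ ^ 2) *
            ((1 / ((G.degree j : ℝ) * ((G.degree j : ℝ) + 1))) *
              ∑ r ∈ Finset.Icc 1 (G.degree j), (r : ℝ) / (1 + ((r : ℝ) - 1) * ρ ^ 2))) := by
    intro j hj
    have hij : i ∈ G.neighborFinset j := by
      rw [SimpleGraph.mem_neighborFinset] at hj ⊢
      exact hj.symm
    have hdegpos : 0 < G.degree j := by
      rw [SimpleGraph.degree]
      exact Finset.card_pos.mpr ⟨i, hij⟩
    have hdegpos' : (0:ℝ) < (G.degree j : ℝ) := by exact_mod_cast hdegpos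
    have hN : (0:ℝ) < (G.degree j : ℝ) * ((G.degree j : ℝ) + 1) := by nlinarith
    have hkey := key3 G hij
      (fun m => ρ ^ 2 / ((1 - ρ ^ 2) * (1 + ((m : ℝ) - 1) * ρ ^ 2)))
    have hS : ∑ r ∈ Finset.Icc 1 (G.degree j),
          (r : ℝ) * (ρ ^ 2 / ((1 - ρ ^ 2) * (1 + ((r : ℝ) - 1) * ρ ^ 2)))
        = ρ ^ 2 / (1 - ρ ^ 2) *
          ∑ r ∈ Finset.Icc 1 (G.degree j), (r : ℝ) / (1 + ((r : ℝ) - 1) * ρ ^ 2) := by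
      rw [Finset.mul_sum]
      apply Finset.sum_congr rfl
      intro r hr
      have hr1 : 1 ≤ r := (Finset.mem_Icc.mp hr).1
      have hr1' : (1:ℝ) ≤ (r:ℝ) := by exact_mod_cast hr1
      have hden : (0:ℝ) < 1 + ((r:ℝ) - 1) * ρ ^ 2 := by nlinarith [sq_nonneg ρ]
      field_simp
    rw [hS] at hkey
    apply mul_left_cancel₀ hN.ne'
    rw [hkey]
    field_simp
  rw [Finset.sum_comm, Finset.sum_congr rfl hC, hA, hB, ← Finset.mul_sum, ← Finset.mul_sum]
  field_simp
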